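/- Assume p ≡ ±1 (mod 8). Then for each i ∈ {0,1}, identifying each class with its set of integer representatives in {0,1,...,2p-1}, one has E_i = {u + p : u ∈ D_i, u < p} ∪ {u - p : u ∈ D_i, u > p}. -/

import Mathlib

open Polynomial

/-- The generalized cyclotomic class `D_i = {g^(2n+i) mod 2p : n = 0,...,(p-3)/2}` in `Z_{2p}`. -/
def Dcl (p g : ℕ) (i : ℕ) : Finset (ZMod (2 * p)) :=
  (Finset.range ((p - 1) / 2)).image (fun n => (g : ZMod (2 * p)) ^ (2 * n + i))

/-- The generalized cyclotomic class `E_i = {2u mod 2p : u ∈ D_i}` in `Z_{2p}`. -/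
def Ecl (p g : ℕ) (i : ℕ) : Finset (ZMod (2 * p)) :=
  (Dcl p g i).image (fun u => 2 * u)

section aux

variable {p g : ℕ}

/-- Any power `g^(2n+i)` with arbitrary `n` lies in `Dcl p g i`. -/
lemma Dcl_pow_mem (hp : p.Prime) (hpodd : Odd p)
    (hg2 : orderOf (g : ZMod (2 * p)) = p - 1) (i n : ℕ) :
    (g : ZMod (2 * p)) ^ (2 * n + i) ∈ Dcl p g i := by
  have hp2 : p ≠ 2 := by rintro rfl; simp [Nat.odd_iff] at hpodd
  have hp3 : 3 ≤ p := by have := hp.two_le; omega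
  have hpo : p % 2 = 1 := Nat.odd_iff.mp hpodd
  set m := (p - 1) / 2 with hmdef
  have hm : 2 * m = p - 1 := by omega
  have hm0 : 0 < m := by omega
  have hone : (g : ZMod (2 * p)) ^ (p - 1) = 1 := by
    rw [← hg2]; exact pow_orderOf_eq_one _
  refine Finset.mem_image.mpr ⟨n % m, Finset.mem_range.mpr (Nat.mod_lt _ hm0), ?_⟩
  have hnd : m * (n / m) + n % m = n := Nat.div_add_mod n m
  have hexp : 2 * n + i = (2 * (n % m) + i) + (p - 1) * (n / m) := by
    rw [← hm]; nth_rewrite 1 [← hnd]; ring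
  rw [hexp]
  conv_rhs => rw [pow_add, pow_mul, hone, one_pow]
  rw [mul_one]

lemma mem_Dcl_iff (hp : p.Prime) (hpodd : Odd p)
    (hg2 : orderOf (g : ZMod (2 * p)) = p - 1) {i : ℕ} {x : ZMod (2 * p)} :
    x ∈ Dcl p g i ↔ ∃ n, x = (g : ZMod (2 * p)) ^ (2 * n + i) := by
  constructor
  · intro hx
    obtain ⟨n, _, rfl⟩ := Finset.mem_image.mp hx
    exact ⟨n, rfl⟩
  · rintro ⟨n, rfl⟩
    exact Dcl_pow_mem hp hpodd hg2 i n

/-- For odd `g`, `p * g^j = p` in `ZMod (2*p)`. -/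
lemma p_mul_pow (hgodd : Odd g) (j : ℕ) :
    (p : ZMod (2 * p)) * (g : ZMod (2 * p)) ^ j = (p : ZMod (2 * p)) := by
  have hgj : Odd (g ^ j) := hgodd.pow
  obtain ⟨t, ht⟩ : 2 ∣ g ^ j - 1 := by
    obtain ⟨s, hs⟩ := hgj; exact ⟨s, by omega⟩
  have hg1 : 1 ≤ g ^ j := hgj.pos
  have hmod : (p * g ^ j) ≡ p [MOD 2 * p] := by
    refine ((Nat.modEq_iff_dvd' (Nat.le_mul_of_pos_right p hg1)).mpr ?_).symm
    refine ⟨t, ?_⟩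
    have h' : g ^ j = 2 * t + 1 := by omega
    have h'' : p * (2 * t + 1) = 2 * p * t + p := by ring
    calc p * g ^ j - p = 2 * p * t + p - p := by rw [h', h'']
      _ = 2 * p * t := Nat.add_sub_cancel _ _
  have := (ZMod.natCast_eq_natCast_iff _ _ _).mpr hmod
  push_cast at this
  exact this

/-- `2` is the square of an even power of `g` shifted by `p` in `ZMod (2*p)`. -/
lemma exists_pow_eq_two_add_p (hp : p.Prime) (hpodd : Odd p)
    (hp8 : p % 8 = 1 ∨ p % 8 = 7) (hgodd : Odd g)
    (hg1 : orderOf (g : ZMod p) = p - 1) :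
    ∃ k, (g : ZMod (2 * p)) ^ (2 * k) = 2 + (p : ZMod (2 * p)) := by
  haveI : Fact p.Prime := ⟨hp⟩
  have hp2 : p ≠ 2 := by rintro rfl; simp [Nat.odd_iff] at hpodd
  have hp3 : 3 ≤ p := by have := hp.two_le; omega
  have hsq : IsSquare (2 : ZMod p) := (ZMod.exists_sq_eq_two_iff hp2).mpr hp8
  obtain ⟨c, hc⟩ := hsq
  have hc0 : c ≠ 0 := by
    rintro rfl
    rw [mul_zero] at hc
    have : ((2 : ℕ) : ZMod p) = 0 := by exact_mod_cast hc
    rw [ZMod.natCast_eq_zero_iff] at this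
    have := Nat.le_of_dvd (by norm_num) this
    omega
  have hgfin : IsOfFinOrder (g : ZMod p) := by
    rw [← orderOf_pos_iff, hg1]; omega
  have hgu := hgfin.isUnit
  set gu := hgu.unit with hgudef
  have hgu_ord : orderOf gu = p - 1 := by
    rw [← hg1, ← orderOf_units, IsUnit.unit_spec]
  have htop : Subgroup.zpowers gu = ⊤ := by
    apply Subgroup.eq_top_of_card_eq
    rw [Nat.card_zpowers, hgu_ord, Nat.card_eq_fintype_card, ZMod.card_units]
  have hcu := (isUnit_iff_ne_zero.mpr hc0)
  have hmem : hcu.unit ∈ Subgroup.zpowers gu := htop ▸ Subgroup.mem_top _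
  obtain ⟨m, hm⟩ := mem_powers_iff_mem_zpowers.mpr hmem
  have hgm : (g : ZMod p) ^ m = c := by
    have := congrArg (Units.val) hm
    simpa [hgudef] using this
  have hpow : (g : ZMod p) ^ (2 * m) = 2 := by
    rw [two_mul, pow_add, hgm, ← hc]
  refine ⟨m, ?_⟩
  have hmod : g ^ (2 * m) ≡ 2 + p [MOD 2 * p] := by
    rw [← Nat.modEq_and_modEq_iff_modEq_mul (Nat.coprime_two_left.mpr hpodd)]
    constructor
    · show g ^ (2 * m) % 2 = (2 + p) % 2
      have := Nat.odd_iff.mp (hgodd.pow (n := 2 * m))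
      have := Nat.odd_iff.mp hpodd
      omega
    · rw [← ZMod.natCast_eq_natCast_iff]
      push_cast [ZMod.natCast_self]
      rw [hpow]; ring
  have := (ZMod.natCast_eq_natCast_iff _ _ _).mpr hmod
  push_cast at this
  exact this

end aux

theorem stmt9 (p g : ℕ) (hp : p.Prime) (hpodd : Odd p)
    (hp8 : p % 8 = 1 ∨ p % 8 = 7)
    (hgodd : Odd g)
    (hg1 : orderOf (g : ZMod p) = p - 1)
    (hg2 : orderOf (g : ZMod (2 * p)) = p - 1)
    (i : ℕ) (hi : i < 2) :
    (Ecl p g i).image ZMod.val =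
      ((Dcl p g i).filter (fun u => u.val < p)).image (fun u => u.val + p) ∪
      ((Dcl p g i).filter (fun u => p < u.val)).image (fun u => u.val - p) := by
  have hp2 : p ≠ 2 := by rintro rfl; simp [Nat.odd_iff] at hpodd
  have hp3 : 3 ≤ p := by have := hp.two_le; omega
  haveI : NeZero (2 * p) := ⟨by omega⟩
  obtain ⟨k, hk⟩ := exists_pow_eq_two_add_p hp hpodd hp8 hgodd hg1
  have hone : (g : ZMod (2 * p)) ^ (p - 1) = 1 := by
    rw [← hg2]; exact pow_orderOf_eq_one _
  have hpp : (p : ZMod (2 * p)) + p = 0 := by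
    have : ((2 * p : ℕ) : ZMod (2 * p)) = 0 := ZMod.natCast_self _
    push_cast at this
    linear_combination this
  -- B : 2 * g^(2n+i) = g^(2(n+k)+i) + p
  have hB : ∀ n, 2 * (g : ZMod (2 * p)) ^ (2 * n + i) =
      (g : ZMod (2 * p)) ^ (2 * (n + k) + i) + p := by
    intro n
    have h1 : (g : ZMod (2 * p)) ^ (2 * (n + k) + i)
        = (g : ZMod (2 * p)) ^ (2 * n + i) * (g : ZMod (2 * p)) ^ (2 * k) := by
      rw [← pow_add]; ring_nf
    rw [h1, hk]
    have h2 := p_mul_pow (p := p) hgodd (2 * n + i)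
    linear_combination -h2 - hpp
  -- A : g^(2n+i) + p = 2 * g^(2(n + k*(p-2))+i)
  have hA : ∀ n, (g : ZMod (2 * p)) ^ (2 * n + i) + p =
      2 * (g : ZMod (2 * p)) ^ (2 * (n + k * (p - 2)) + i) := by
    intro n
    have hw1 : (2 + (p : ZMod (2 * p))) * (g : ZMod (2 * p)) ^ (2 * (k * (p - 2))) = 1 := by
      rw [← hk, ← pow_add]
      have hexp : 2 * k + 2 * (k * (p - 2)) = (p - 1) * (2 * k) := by
        have hpe : p - 1 = (p - 2) + 1 := by omega
        rw [hpe]; ring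
      rw [hexp, pow_mul, hone, one_pow]
    have h1 : (g : ZMod (2 * p)) ^ (2 * (n + k * (p - 2)) + i)
        = (g : ZMod (2 * p)) ^ (2 * n + i) * (g : ZMod (2 * p)) ^ (2 * (k * (p - 2))) := by
      rw [← pow_add]; ring_nf
    rw [h1]
    have h2 := p_mul_pow (p := p) hgodd (2 * (k * (p - 2)))
    have h4 := p_mul_pow (p := p) hgodd (2 * n + i)
    -- 2*w = 1 + p where w = g^(2k(p-2)) : from hw1 : 2w + pw = 1, pw = p, p = -p
    -- goal: u + p = 2 * (u * w) = u * (2w) = u * (1+p) = u + up = u + p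
    have h5 : 2 * (g : ZMod (2 * p)) ^ (2 * (k * (p - 2))) = 1 + p := by
      linear_combination hw1 - h2 - hpp
    linear_combination -((g : ZMod (2 * p)) ^ (2 * n + i)) * h5 - h4
  -- key : Ecl = image (· + p) Dcl
  have key : Ecl p g i = (Dcl p g i).image (fun u => u + (p : ZMod (2 * p))) := by
    ext x
    simp only [Ecl, Finset.mem_image]
    constructor
    · rintro ⟨u, hu, rfl⟩
      obtain ⟨n, rfl⟩ := (mem_Dcl_iff hp hpodd hg2).mp hu
      exact ⟨_, Dcl_pow_mem hp hpodd hg2 i (n + k), (hB n).symm⟩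
    · rintro ⟨u, hu, rfl⟩
      obtain ⟨n, rfl⟩ := (mem_Dcl_iff hp hpodd hg2).mp hu
      exact ⟨_, Dcl_pow_mem hp hpodd hg2 i (n + k * (p - 2)), (hA n).symm⟩
  rw [key, Finset.image_image]
  simp only [Function.comp_def]
  have hval : ∀ u : ZMod (2 * p), (u + (p : ZMod (2 * p))).val = (u.val + p) % (2 * p) := by
    intro u
    have hcast : ((u.val : ℕ) : ZMod (2 * p)) = u := ZMod.natCast_rightInverse u
    have : u + (p : ZMod (2 * p)) = ((u.val + p : ℕ) : ZMod (2 * p)) := by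
      push_cast
      rw [hcast]
    rw [this, ZMod.val_natCast]
  have hne : ∀ u ∈ Dcl p g i, u.val ≠ p := by
    intro u hu hup
    obtain ⟨n, rfl⟩ := (mem_Dcl_iff hp hpodd hg2).mp hu
    have hgfin : IsOfFinOrder (g : ZMod (2 * p)) := by
      rw [← orderOf_pos_iff, hg2]; omega
    have hunit : IsUnit ((g : ZMod (2 * p)) ^ (2 * n + i)) := hgfin.isUnit.pow _
    have heq : ((g : ZMod (2 * p)) ^ (2 * n + i)) = ((p : ℕ) : ZMod (2 * p)) := by
      conv_lhs => rw [← ZMod.natCast_rightInverse ((g : ZMod (2 * p)) ^ (2 * n + i))]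
      rw [hup]
    rw [heq, ZMod.isUnit_iff_coprime] at hunit
    have hdvd : p ∣ Nat.gcd p (2 * p) := Nat.dvd_gcd dvd_rfl ⟨2, by ring⟩
    rw [Nat.Coprime] at hunit
    rw [hunit] at hdvd
    have := Nat.le_of_dvd one_pos hdvd
    omega
  ext x
  simp only [Finset.mem_image, Finset.mem_union, Finset.mem_filter]
  constructor
  · rintro ⟨u, hu, rfl⟩
    have hulp : u.val < 2 * p := ZMod.val_lt u
    rcases Nat.lt_or_ge u.val p with h | h
    · left
      exact ⟨u, ⟨hu, h⟩, by rw [hval, Nat.mod_eq_of_lt (by omega)]⟩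
    · have h' : p < u.val := lt_of_le_of_ne h (Ne.symm (hne u hu))
      right
      refine ⟨u, ⟨hu, h'⟩, ?_⟩
      rw [hval, show u.val + p = (u.val - p) + 2 * p from by omega,
        Nat.add_mod_right, Nat.mod_eq_of_lt (by omega)]
  · rintro (⟨u, ⟨hu, h⟩, rfl⟩ | ⟨u, ⟨hu, h⟩, rfl⟩)
    · exact ⟨u, hu, by rw [hval, Nat.mod_eq_of_lt (by omega)]⟩
    · have hulp : u.val < 2 * p := ZMod.val_lt u
      refine ⟨u, hu, ?_⟩
      rw [hval, show u.val + p = (u.val - p) + 2 * p from by omega,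
        Nat.add_mod_right, Nat.mod_eq_of_lt (by omega)]
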